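/- Let A : Matrix (Fin (n+n')) (Fin (n+n')) ℝ be positive definite, let A1 be the principal submatrix of A on the first n indices and A2 the principal submatrix on the last n' indices, and let D = fromBlocks A1 0 0 A2 be the block-diagonal part of A (with n, n' ≥ 1). Then D is positive definite, every eigenvalue of D lies in the interval [λmin(A), λmax(A)], and consequently the spectral condition number of D is bounded by that of A: λmax(D)/λmin(D) ≤ λmax(A)/λmin(A). -/

import Mathlib

open Matrix

private lemma aux_dotself {k : Type*} [Fintype k] (u : k → ℝ) (hu : u ≠ 0) :
    0 < u ⬝ᵥ u := by
  refine lt_of_le_of_ne (Finset.sum_nonneg fun i _ => mul_self_nonneg _) ?_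
  intro h
  apply hu
  refine dotProduct_star_self_eq_zero.mp ?_
  rw [star_trivial, ← h]

private lemma aux_rayleigh {m : Type*} [Fintype m] [DecidableEq m] [Nonempty m]
    {M : Matrix m m ℝ} (hM : M.IsHermitian) (x : m → ℝ) :
    (⨅ j, hM.eigenvalues j) * (x ⬝ᵥ x) ≤ x ⬝ᵥ (M *ᵥ x) ∧
      x ⬝ᵥ (M *ᵥ x) ≤ (⨆ j, hM.eigenvalues j) * (x ⬝ᵥ x) := by
  classical
  set U : Matrix m m ℝ := ↑hM.eigenvectorUnitary with hU
  have h1 : U * star U = 1 := Matrix.mem_unitaryGroup_iff.mp hM.eigenvectorUnitary.2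
  set c : m → ℝ := star U *ᵥ x with hc
  have hkey : x ᵥ* U = c := by
    rw [hc]
    ext i
    simp [Matrix.vecMul, Matrix.mulVec, dotProduct, Matrix.star_apply, mul_comm]
  have hxc : x ⬝ᵥ x = c ⬝ᵥ c := by
    conv_lhs => rw [show x ⬝ᵥ x = x ⬝ᵥ ((U * star U) *ᵥ x) by rw [h1, Matrix.one_mulVec]]
    rw [← Matrix.mulVec_mulVec, Matrix.dotProduct_mulVec, hkey, hc]
  have hq : x ⬝ᵥ (M *ᵥ x) = ∑ i, hM.eigenvalues i * (c i * c i) := by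
    conv_lhs => rw [hM.spectral_theorem, Unitary.conjStarAlgAut_apply, ← hU]
    rw [Matrix.mul_assoc, ← Matrix.mulVec_mulVec, Matrix.dotProduct_mulVec, hkey,
      ← Matrix.mulVec_mulVec, ← hc]
    simp only [dotProduct, Matrix.mulVec_diagonal, Function.comp_apply,
      RCLike.ofReal_real_eq_id, id_eq]
    exact Finset.sum_congr rfl fun i _ => by ring
  have hcc : c ⬝ᵥ c = ∑ i, c i * c i := rfl
  constructor
  · rw [hq, hxc, hcc, Finset.mul_sum]
    refine Finset.sum_le_sum fun i _ => ?_
    exact mul_le_mul_of_nonneg_right (ciInf_le (Finite.bddBelow_range _) i) (mul_self_nonneg _)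
  · rw [hq, hxc, hcc, Finset.mul_sum]
    refine Finset.sum_le_sum fun i _ => ?_
    exact mul_le_mul_of_nonneg_right (le_ciSup (Finite.bddAbove_range _) i) (mul_self_nonneg _)

theorem stmt_6 {n n' : ℕ}
    (A : Matrix (Fin ((n + 1) + (n' + 1))) (Fin ((n + 1) + (n' + 1))) ℝ)
    (hA : A.PosDef)
    (A1 : Matrix (Fin (n + 1)) (Fin (n + 1)) ℝ)
    (hA1 : A1 = A.submatrix (Fin.castAdd (n' + 1)) (Fin.castAdd (n' + 1)))
    (A2 : Matrix (Fin (n' + 1)) (Fin (n' + 1)) ℝ)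
    (hA2 : A2 = A.submatrix (Fin.natAdd (n + 1)) (Fin.natAdd (n + 1)))
    (hD : (Matrix.fromBlocks A1 0 0 A2).IsHermitian) :
    (Matrix.fromBlocks A1 0 0 A2).PosDef ∧
      (∀ i, (⨅ j, hA.1.eigenvalues j) ≤ hD.eigenvalues i ∧
        hD.eigenvalues i ≤ ⨆ j, hA.1.eigenvalues j) ∧
      (⨆ i, hD.eigenvalues i) / (⨅ i, hD.eigenvalues i) ≤
        (⨆ j, hA.1.eigenvalues j) / (⨅ j, hA.1.eigenvalues j) := by
  classical
  haveI : Nonempty (Fin ((n + 1) + (n' + 1))) := ⟨⟨0, by omega⟩⟩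
  set e : Fin (n + 1) ⊕ Fin (n' + 1) ≃ Fin ((n + 1) + (n' + 1)) := finSumFinEquiv with he
  set A' : Matrix (Fin (n + 1) ⊕ Fin (n' + 1)) (Fin (n + 1) ⊕ Fin (n' + 1)) ℝ :=
    A.submatrix e e with hA'
  -- transfer quadratic forms along the equivalence
  have hquad : ∀ w : Fin (n + 1) ⊕ Fin (n' + 1) → ℝ,
      (w ∘ e.symm) ⬝ᵥ (A *ᵥ (w ∘ e.symm)) = w ⬝ᵥ (A' *ᵥ w) := by
    intro w
    have h1 : A' *ᵥ w = (A *ᵥ (w ∘ e.symm)) ∘ e :=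
      Matrix.submatrix_mulVec_equiv A w e e
    rw [h1]
    simp only [dotProduct, Function.comp_apply]
    exact (Fintype.sum_equiv e _ _ fun k => by simp).symm
  -- identify blocks of A'
  have hb11 : A'.toBlocks₁₁ = A1 := by
    ext i j
    simp [Matrix.toBlocks₁₁, hA', hA1, he]
  have hb22 : A'.toBlocks₂₂ = A2 := by
    ext i j
    simp [Matrix.toBlocks₂₂, hA', hA2, he]
  have hblocks : A' = Matrix.fromBlocks A1 A'.toBlocks₁₂ A'.toBlocks₂₁ A2 := by
    conv_lhs => rw [← Matrix.fromBlocks_toBlocks A']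
    rw [hb11, hb22]
  have hq1 : ∀ v1 : Fin (n + 1) → ℝ,
      Sum.elim v1 (0 : Fin (n' + 1) → ℝ) ⬝ᵥ (A' *ᵥ Sum.elim v1 0) = v1 ⬝ᵥ (A1 *ᵥ v1) := by
    intro v1
    rw [hblocks, Matrix.fromBlocks_mulVec]
    simp [sumElim_dotProduct_sumElim]
  have hq2 : ∀ v2 : Fin (n' + 1) → ℝ,
      Sum.elim (0 : Fin (n + 1) → ℝ) v2 ⬝ᵥ (A' *ᵥ Sum.elim 0 v2) = v2 ⬝ᵥ (A2 *ᵥ v2) := by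
    intro v2
    rw [hblocks, Matrix.fromBlocks_mulVec]
    simp [sumElim_dotProduct_sumElim]
  -- quadratic form of A at an embedded vector
  have hAquad : ∀ w : Fin (n + 1) ⊕ Fin (n' + 1) → ℝ, w ≠ 0 →
      0 < w ⬝ᵥ (A' *ᵥ w) := by
    intro w hw
    have hx : (w ∘ e.symm) ≠ 0 := by
      intro h
      apply hw
      funext k
      have := congr_fun h (e k)
      simpa using this
    have := hA.dotProduct_mulVec_pos hx
    rw [star_trivial] at this
    rw [← hquad w]
    exact this
  have hpos1 : ∀ v1 : Fin (n + 1) → ℝ, v1 ≠ 0 → 0 < v1 ⬝ᵥ (A1 *ᵥ v1) := by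
    intro v1 hv1
    rw [← hq1]
    refine hAquad _ ?_
    intro h
    exact hv1 (funext fun i => by simpa using congr_fun h (Sum.inl i))
  have hpos2 : ∀ v2 : Fin (n' + 1) → ℝ, v2 ≠ 0 → 0 < v2 ⬝ᵥ (A2 *ᵥ v2) := by
    intro v2 hv2
    rw [← hq2]
    refine hAquad _ ?_
    intro h
    exact hv2 (funext fun i => by simpa using congr_fun h (Sum.inr i))
  have hnn1 : ∀ v1 : Fin (n + 1) → ℝ, 0 ≤ v1 ⬝ᵥ (A1 *ᵥ v1) := by
    intro v1
    rcases eq_or_ne v1 0 with h | h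
    · simp [h]
    · exact (hpos1 v1 h).le
  have hnn2 : ∀ v2 : Fin (n' + 1) → ℝ, 0 ≤ v2 ⬝ᵥ (A2 *ᵥ v2) := by
    intro v2
    rcases eq_or_ne v2 0 with h | h
    · simp [h]
    · exact (hpos2 v2 h).le
  have hDquad : ∀ (x1 : Fin (n + 1) → ℝ) (x2 : Fin (n' + 1) → ℝ),
      Sum.elim x1 x2 ⬝ᵥ ((Matrix.fromBlocks A1 0 0 A2) *ᵥ Sum.elim x1 x2)
        = x1 ⬝ᵥ (A1 *ᵥ x1) + x2 ⬝ᵥ (A2 *ᵥ x2) := by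
    intro x1 x2
    rw [Matrix.fromBlocks_mulVec]
    simp [sumElim_dotProduct_sumElim]
  -- Part 1: positive definiteness
  have hDpos : (Matrix.fromBlocks A1 0 0 A2).PosDef := by
    refine Matrix.PosDef.of_dotProduct_mulVec_pos hD fun x hx => ?_
    rw [star_trivial]
    have hxel : x = Sum.elim (x ∘ Sum.inl) (x ∘ Sum.inr) := (Sum.elim_comp_inl_inr x).symm
    rw [hxel, hDquad]
    have hcases : (x ∘ Sum.inl) ≠ 0 ∨ (x ∘ Sum.inr) ≠ 0 := by
      by_contra h
      push_neg at h
      apply hx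
      rw [hxel, h.1, h.2]
      funext k
      cases k <;> rfl
    rcases hcases with h | h
    · exact add_pos_of_pos_of_nonneg (hpos1 _ h) (hnn2 _)
    · exact add_pos_of_nonneg_of_pos (hnn1 _) (hpos2 _ h)
  -- Part 2: eigenvalue bounds
  have h2 : ∀ i, (⨅ j, hA.1.eigenvalues j) ≤ hD.eigenvalues i ∧
      hD.eigenvalues i ≤ ⨆ j, hA.1.eigenvalues j := by
    intro i
    set μ := hD.eigenvalues i with hμ
    set v : (Fin (n + 1) ⊕ Fin (n' + 1)) → ℝ := ⇑(hD.eigenvectorBasis i) with hv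
    have heig : (Matrix.fromBlocks A1 0 0 A2) *ᵥ v = μ • v := hD.mulVec_eigenvectorBasis i
    have hvne : v ≠ 0 := by
      intro h
      exact hD.eigenvectorBasis.orthonormal.ne_zero i (by ext j; exact congr_fun h j)
    set v1 := v ∘ Sum.inl with hv1
    set v2 := v ∘ Sum.inr with hv2
    have hvel : v = Sum.elim v1 v2 := (Sum.elim_comp_inl_inr v).symm
    have heig1 : A1 *ᵥ v1 = μ • v1 := by
      funext j
      have := congr_fun heig (Sum.inl j)
      rw [hvel, Matrix.fromBlocks_mulVec] at this
      simpa using this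
    have heig2 : A2 *ᵥ v2 = μ • v2 := by
      funext j
      have := congr_fun heig (Sum.inr j)
      rw [hvel, Matrix.fromBlocks_mulVec] at this
      simpa using this
    have hcases : v1 ≠ 0 ∨ v2 ≠ 0 := by
      by_contra h
      push_neg at h
      apply hvne
      rw [hvel, h.1, h.2]
      funext k
      cases k <;> rfl
    -- generic argument from an eigen-pair on one block
    have main : ∀ (w : Fin (n + 1) ⊕ Fin (n' + 1) → ℝ) (s : ℝ),
        w ⬝ᵥ (A' *ᵥ w) = μ * s → (w ∘ e.symm) ⬝ᵥ (w ∘ e.symm) = s → 0 < s →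
        (⨅ j, hA.1.eigenvalues j) ≤ μ ∧ μ ≤ ⨆ j, hA.1.eigenvalues j := by
      intro w s hws hxs hs
      obtain ⟨hlow, hhigh⟩ := aux_rayleigh hA.1 (w ∘ e.symm)
      rw [hquad w, hws, hxs] at hlow hhigh
      exact ⟨(mul_le_mul_iff_left₀ hs).mp hlow, (mul_le_mul_iff_left₀ hs).mp hhigh⟩
    rcases hcases with h | h
    · refine main (Sum.elim v1 0) (v1 ⬝ᵥ v1) ?_ ?_ (aux_dotself v1 h)
      · rw [hq1, heig1, dotProduct_smul, smul_eq_mul]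
      · have : (Sum.elim v1 (0 : Fin (n' + 1) → ℝ) ∘ e.symm) ⬝ᵥ (Sum.elim v1 0 ∘ e.symm)
            = Sum.elim v1 (0 : Fin (n' + 1) → ℝ) ⬝ᵥ Sum.elim v1 0 := by
          simp only [dotProduct, Function.comp_apply]
          exact (Fintype.sum_equiv e _ _ fun k => by simp).symm
        rw [this, sumElim_dotProduct_sumElim]
        simp
    · refine main (Sum.elim 0 v2) (v2 ⬝ᵥ v2) ?_ ?_ (aux_dotself v2 h)
      · rw [hq2, heig2, dotProduct_smul, smul_eq_mul]
      · have : (Sum.elim (0 : Fin (n + 1) → ℝ) v2 ∘ e.symm) ⬝ᵥ (Sum.elim 0 v2 ∘ e.symm)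
            = Sum.elim (0 : Fin (n + 1) → ℝ) v2 ⬝ᵥ Sum.elim 0 v2 := by
          simp only [dotProduct, Function.comp_apply]
          exact (Fintype.sum_equiv e _ _ fun k => by simp).symm
        rw [this, sumElim_dotProduct_sumElim]
        simp
  -- Part 3: condition number bound
  refine ⟨hDpos, h2, ?_⟩
  have hminA : 0 < ⨅ j, hA.1.eigenvalues j := by
    obtain ⟨j0, _, hj0⟩ := Finset.exists_min_image Finset.univ hA.1.eigenvalues
      ⟨Classical.arbitrary _, Finset.mem_univ _⟩
    exact lt_of_lt_of_le (hA.eigenvalues_pos j0) (le_ciInf fun j => hj0 j (Finset.mem_univ j))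
  have hsupD_le : (⨆ i, hD.eigenvalues i) ≤ ⨆ j, hA.1.eigenvalues j :=
    ciSup_le fun i => (h2 i).2
  have hinfA_le : (⨅ j, hA.1.eigenvalues j) ≤ ⨅ i, hD.eigenvalues i :=
    le_ciInf fun i => (h2 i).1
  have h0supA : 0 ≤ ⨆ j, hA.1.eigenvalues j :=
    hminA.le.trans ((ciInf_le (Finite.bddBelow_range _) (Classical.arbitrary _)).trans
      (le_ciSup (Finite.bddAbove_range _) _))
  exact div_le_div₀ h0supA hsupD_le hminA hinfA_le
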